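/- arXiv:math/9412231 — 5 statements merged into one kernel-verified Lean document; each statement's English description precedes it below -/
import Mathlib

section
/- The relation → on ordinals defined by 'α → β iff there is a finite partition of α into pieces P_0,…,P_{n-1} such that reordering α by: i <* j iff (i and j lie in the same piece and i < j) or (i lies in an earlier-indexed piece than j), yields a linear order of order type β' is transitive: if α → β and β → γ then α → γ. -/
universe u

/-- The reordering of the ordinals below `α` induced by a finite partition
(given as a coloring `c` into `Fin n`): compare piece index first, then the
usual ordinal order within a piece. -/
def pieceOrder {α : Ordinal.{u}} {n : ℕ} (c : ↥(Set.Iio α) → Fin n) :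
    ↥(Set.Iio α) → ↥(Set.Iio α) → Prop :=
  fun x y => c x < c y ∨ (c x = c y ∧ x.1 < y.1)

/-- `OrdArrow α β` ("α → β"): some finite partition of `α`, reordered by piece
index first and then the usual ordinal order, is a well-order of order type `β`. -/
def OrdArrow (α β : Ordinal.{u}) : Prop :=
  ∃ (n : ℕ) (c : ↥(Set.Iio α) → Fin n)
    (h : IsWellOrder (↥(Set.Iio α)) (pieceOrder c)),
    @Ordinal.type _ (pieceOrder c) h = Ordinal.lift.{u + 1} β

theorem nat_lex_lt {n a a' b b' : ℕ} (hb : b < n) (hb' : b' < n) :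
    a * n + b < a' * n + b' ↔ a < a' ∨ (a = a' ∧ b < b') := by
  constructor
  · intro h
    rcases lt_trichotomy a a' with h1 | h1 | h1
    · exact Or.inl h1
    · subst h1; exact Or.inr ⟨rfl, by omega⟩
    · exfalso
      have : a' * n + n ≤ a * n := by
        calc a' * n + n = (a' + 1) * n := by ring
          _ ≤ a * n := Nat.mul_le_mul_right _ h1
      omega
  · rintro (h | ⟨rfl, h⟩)
    · have : a * n + n ≤ a' * n := by
        calc a * n + n = (a + 1) * n := by ring
          _ ≤ a' * n := Nat.mul_le_mul_right _ h
      omega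
    · omega

theorem nat_lex_eq {n a a' b b' : ℕ} (hb : b < n) (hb' : b' < n) :
    a * n + b = a' * n + b' ↔ a = a' ∧ b = b' := by
  constructor
  · intro h
    have ha : a = a' := by
      by_contra hne
      rcases lt_or_gt_of_ne hne with h1 | h1
      · have := (nat_lex_lt hb hb').2 (Or.inl h1); omega
      · have := (nat_lex_lt hb' hb).2 (Or.inl h1); omega
    subst ha; omega
  · rintro ⟨rfl, rfl⟩; rfl

theorem ordArrow_trans (α β γ : Ordinal.{u})
    (hab : OrdArrow α β) (hbc : OrdArrow β γ) : OrdArrow α γ := by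
  obtain ⟨n, c, hc, htc⟩ := hab
  obtain ⟨m, d, hd, htd⟩ := hbc
  haveI := hc
  haveI := hd
  haveI : IsWellOrder (↥(Set.Iio β)) (· < ·) := isWellOrder_lt
  have typeIio : Ordinal.type ((· < ·) : ↥(Set.Iio β) → ↥(Set.Iio β) → Prop)
      = Ordinal.lift.{u + 1} β := by
    haveI : IsWellOrder β.ToType (· < ·) := isWellOrder_lt
    have h2 := (Ordinal.ToType.mk (o := β)).toRelIsoLT.ordinal_lift_type_eq
    rw [Ordinal.type_toType] at h2
    rw [← Ordinal.lift_umax.{u + 1, u}, Ordinal.lift_id'.{u + 1, u}] at h2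
    exact h2
  obtain ⟨f⟩ := Ordinal.type_eq.1 (htc.trans typeIio.symm)
  set c' : ↥(Set.Iio α) → Fin (m * n) := fun x =>
    ⟨(d (f x)).1 * n + (c x).1, by
      have h1 : (d (f x)).1 + 1 ≤ m := (d (f x)).2
      have h2 : (c x).1 < n := (c x).2
      calc (d (f x)).1 * n + (c x).1 < (d (f x)).1 * n + n := by omega
        _ = ((d (f x)).1 + 1) * n := by ring
        _ ≤ m * n := Nat.mul_le_mul_right _ h1⟩ with hc'
  have key : ∀ x y, pieceOrder c' x y ↔ pieceOrder d (f x) (f y) := by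
    intro x y
    have hf : f x < f y ↔ pieceOrder c x y := f.map_rel_iff
    simp only [pieceOrder] at hf ⊢
    simp only [hc', Fin.lt_def, Fin.ext_iff]
    rw [nat_lex_lt (c x).2 (c y).2, nat_lex_eq (c x).2 (c y).2]
    rw [show ((f x).1 < (f y).1) ↔ f x < f y from Subtype.coe_lt_coe, hf]
    simp only [Fin.lt_def, Fin.ext_iff] at *
    tauto
  let F : pieceOrder c' ≃r pieceOrder d :=
    RelIso.mk f.toEquiv (fun {a b} => (key a b).symm)
  haveI hW : IsWellOrder (↥(Set.Iio α)) (pieceOrder c') := F.toRelEmbedding.isWellOrder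
  exact ⟨m * n, c', hW, F.ordinal_type_eq.trans htd⟩
end

section
/- If α → β via a finite-partition reordering and β < α, then there exist ordinals γ1, γ2 with γ1 + γ2 = α and γ2 + γ1 = β. -/
universe u

namespace OrdArrowAux
open Ordinal Set

-- assume toolkit (copied later); for now re-declare via include? Just copy file content:
variable {X : Type*}

/-- Order type of a subset of a well-order. -/
noncomputable def tps (r : X → X → Prop) [IsWellOrder X r] (S : Set X) : Ordinal :=
  Ordinal.type (Subrel r (· ∈ S))

theorem tps_mono (r : X → X → Prop) [IsWellOrder X r] {S T : Set X} (h : S ⊆ T) :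
    tps r S ≤ tps r T := by
  refine RelEmbedding.ordinal_type_le (RelEmbedding.ofMonotone
    (fun x : ↥S => (⟨x.1, h x.2⟩ : ↥T)) ?_)
  intro a b hab
  exact hab

theorem tps_union_ge (r : X → X → Prop) [IsWellOrder X r] {S T : Set X}
    (hST : ∀ s ∈ S, ∀ t ∈ T, r s t) :
    tps r S + tps r T ≤ tps r (S ∪ T) := by
  rw [tps, tps, tps, ← type_sum_lex]
  refine RelEmbedding.ordinal_type_le (RelEmbedding.ofMonotone
    (Sum.elim (fun s : ↥S => (⟨s.1, Or.inl s.2⟩ : ↥(S ∪ T)))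
      (fun t : ↥T => (⟨t.1, Or.inr t.2⟩ : ↥(S ∪ T)))) ?_)
  rintro (a | a) (b | b) hab
  · exact (Sum.lex_inl_inl (r := Subrel r (· ∈ S)) (s := Subrel r (· ∈ T))).1 hab
  · exact hST a.1 a.2 b.1 b.2
  · exact absurd hab Sum.lex_inr_inl
  · exact (Sum.lex_inr_inr (r := Subrel r (· ∈ S)) (s := Subrel r (· ∈ T))).1 hab

noncomputable abbrev tp (S : Set Ordinal.{u}) : Ordinal.{u+1} :=
  tps ((· < ·) : Ordinal.{u} → Ordinal.{u} → Prop) S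

theorem tp_Iio (a : Ordinal.{u}) : tp (Set.Iio a) = Ordinal.lift.{u+1} a :=
  type_lt_Iio a

theorem tp_Ico (a b : Ordinal.{u}) : tp (Set.Ico a b) = Ordinal.lift.{u+1} (b - a) := by
  rw [← tp_Iio (b - a)]
  refine (Ordinal.type_eq.2 ⟨RelIso.ofSurjective (RelEmbedding.ofMonotone
    (fun x : ↥(Set.Iio (b - a)) =>
      (⟨a + x.1, ⟨le_self_add, Ordinal.lt_sub.1 x.2⟩⟩ : ↥(Set.Ico a b))) ?_) ?_⟩).symm
  · intro x y hxy
    exact add_lt_add_right hxy a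
  · rintro ⟨y, hy1, hy2⟩
    refine ⟨⟨y - a, ?_⟩, ?_⟩
    · have : a + (y - a) = y := Ordinal.add_sub_cancel_of_le hy1
      exact Ordinal.lt_sub.2 (by rwa [this])
    · exact Subtype.ext (Ordinal.add_sub_cancel_of_le hy1)

theorem tp_block (μ : Ordinal.{u}) (x : Ordinal.{u}) :
    tp (Set.Ico (μ * x) (μ * (x + 1))) = Ordinal.lift.{u+1} μ := by
  rw [tp_Ico, mul_add, mul_one, add_sub_cancel]


/-- Covering property of `ω ^ e`: one of two sets covering `Iio (ω ^ e)` has full type. -/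
def CovP (e : Ordinal.{u}) : Prop :=
  ∀ A B : Set Ordinal.{u}, Iio (ω ^ e) ⊆ A ∪ B →
    tp (A ∩ Iio (ω ^ e)) = Ordinal.lift.{u+1} (ω ^ e) ∨
    tp (B ∩ Iio (ω ^ e)) = Ordinal.lift.{u+1} (ω ^ e)

theorem cov2_of_covP {e : Ordinal.{u}} (hP : CovP e) {C A B : Set Ordinal.{u}}
    (hC : tp C = Ordinal.lift.{u+1} (ω ^ e)) (hcov : C ⊆ A ∪ B) :
    tp (A ∩ C) = Ordinal.lift.{u+1} (ω ^ e) ∨ tp (B ∩ C) = Ordinal.lift.{u+1} (ω ^ e) := by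
  obtain ⟨F⟩ : Nonempty (Subrel ((· < ·) : Ordinal.{u} → _ → _) (· ∈ Iio (ω ^ e)) ≃r
      Subrel ((· < ·) : Ordinal.{u} → _ → _) (· ∈ C)) :=
    Ordinal.type_eq.1 ((tp_Iio (ω ^ e)).trans hC.symm)
  have key : ∀ D : Set Ordinal.{u},
      tp ({x | ∃ h : x ∈ Iio (ω ^ e), (F ⟨x, h⟩).1 ∈ D} ∩ Iio (ω ^ e)) =
        Ordinal.lift.{u+1} (ω ^ e) →
      tp (D ∩ C) = Ordinal.lift.{u+1} (ω ^ e) := by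
    intro D hD
    refine le_antisymm ((tps_mono _ inter_subset_right).trans_eq hC) ?_
    rw [← hD]
    refine RelEmbedding.ordinal_type_le (RelEmbedding.ofMonotone
      (fun x : ↥({x | ∃ h : x ∈ Iio (ω ^ e), (F ⟨x, h⟩).1 ∈ D} ∩ Iio (ω ^ e)) =>
        (⟨(F ⟨x.1, x.2.2⟩).1, ?_, (F ⟨x.1, x.2.2⟩).2⟩ : ↥(D ∩ C))) ?_)
    · obtain ⟨h, hmem⟩ := x.2.1
      exact hmem
    · intro a b hab
      exact F.map_rel_iff.2 hab
  rcases hP {x | ∃ h : x ∈ Iio (ω ^ e), (F ⟨x, h⟩).1 ∈ A}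
      {x | ∃ h : x ∈ Iio (ω ^ e), (F ⟨x, h⟩).1 ∈ B}
      (fun x hx => by
        rcases hcov (F ⟨x, hx⟩).2 with h | h
        · exact Or.inl ⟨hx, h⟩
        · exact Or.inr ⟨hx, h⟩) with h | h
  · exact Or.inl (key A h)
  · exact Or.inr (key B h)

theorem glue {d : Ordinal.{u}} {A : Set Ordinal.{u}}
    (hI : {k : ℕ | tp (A ∩ Ico (ω ^ d * k) (ω ^ d * (k + 1))) =
      Ordinal.lift.{u+1} (ω ^ d)}.Infinite) :
    tp (A ∩ Iio (ω ^ Order.succ d)) = Ordinal.lift.{u+1} (ω ^ Order.succ d) := by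
  set μ : Ordinal.{u} := ω ^ d with hμdef
  set p : ℕ → Prop := fun k => tp (A ∩ Ico (μ * k) (μ * (k + 1))) = Ordinal.lift.{u+1} μ with hp
  have hκmono : StrictMono (Nat.nth p) := Nat.nth_strictMono hI
  have hκmem : ∀ l, p (Nat.nth p l) := fun l => Nat.nth_mem_of_infinite hI l
  have hBlkIio : ∀ k : ℕ, Ico (μ * k) (μ * (k + 1)) ⊆ Iio (ω ^ Order.succ d) := by
    intro k x hx
    have h1 : (μ : Ordinal.{u}) * (k + 1) ≤ μ * ω :=
      mul_le_mul_right (le_of_lt (by exact_mod_cast nat_lt_omega0 (k + 1))) μ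
    have : x < μ * ω := lt_of_lt_of_le hx.2 h1
    rwa [← opow_succ] at this
  set V : ℕ → Set Ordinal.{u} :=
    fun l => {x | ∃ j < l, x ∈ A ∩ Ico (μ * (Nat.nth p j)) (μ * (Nat.nth p j + 1))} with hV
  have hVsub : ∀ l, V l ⊆ A ∩ Iio (ω ^ Order.succ d) := by
    rintro l x ⟨j, hj, hA, hB⟩
    exact ⟨hA, hBlkIio _ (by exact_mod_cast hB)⟩
  have hVlb : ∀ l : ℕ, Ordinal.lift.{u+1} μ * l ≤ tp (V l) := by
    intro l
    induction l with
    | zero => simp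
    | succ l ih =>
      have hsplit : V (l + 1) = V l ∪ (A ∩ Ico (μ * (Nat.nth p l)) (μ * (Nat.nth p l + 1))) := by
        ext x
        simp only [hV, mem_setOf_eq, mem_union, Nat.lt_succ_iff_lt_or_eq]
        constructor
        · rintro ⟨j, hj | rfl, hx⟩
          · exact Or.inl ⟨j, hj, hx⟩
          · exact Or.inr hx
        · rintro (⟨j, hj, hx⟩ | hx)
          · exact ⟨j, Or.inl hj, hx⟩
          · exact ⟨l, Or.inr rfl, hx⟩
      have hsep : ∀ s ∈ V l, ∀ t ∈ A ∩ Ico (μ * (Nat.nth p l)) (μ * (Nat.nth p l + 1)), s < t := by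
        rintro s ⟨j, hj, _, hsB⟩ t ⟨_, htB⟩
        have h1 : ((Nat.nth p j : Ordinal.{u}) + 1) ≤ (Nat.nth p l : Ordinal.{u}) := by
          have := hκmono hj
          exact_mod_cast Nat.succ_le_of_lt this
        calc s < μ * ((Nat.nth p j : Ordinal.{u}) + 1) := hsB.2
          _ ≤ μ * (Nat.nth p l : Ordinal.{u}) := mul_le_mul_right h1 μ
          _ ≤ t := htB.1
      calc Ordinal.lift.{u+1} μ * (l + 1 : ℕ)
          = Ordinal.lift.{u+1} μ * l + Ordinal.lift.{u+1} μ := by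
            push_cast
            rw [mul_add, mul_one]
        _ ≤ tp (V l) + tp (A ∩ Ico (μ * (Nat.nth p l)) (μ * (Nat.nth p l + 1))) := by
            have h2 := (hκmem l)
            rw [hp] at h2
            exact add_le_add ih (le_of_eq h2.symm)
        _ ≤ tp (V (l + 1)) := by
            rw [hsplit]
            exact tps_union_ge _ hsep
  refine le_antisymm ((tps_mono _ inter_subset_right).trans_eq (tp_Iio _)) ?_
  have hres : Ordinal.lift.{u+1} (ω ^ Order.succ d) = Ordinal.lift.{u+1} μ * ω := by
    rw [opow_succ, lift_mul, lift_omega0]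
  rw [hres]
  rw [mul_le_iff_of_isSuccLimit isSuccLimit_omega0]
  intro b hb
  obtain ⟨l, rfl⟩ := lt_omega0.1 hb
  exact (hVlb l).trans (tps_mono _ (hVsub l))

theorem covP_all : ∀ e : Ordinal.{u}, CovP e := by
  intro e
  induction e using Ordinal.induction with
  | h e IH =>
  rcases Ordinal.zero_or_succ_or_isSuccLimit e with he | ⟨d, rfl⟩ | he
  · subst he
    intro A B hcov
    rcases hcov (show (0 : Ordinal.{u}) ∈ Iio (ω ^ (0 : Ordinal.{u})) by
      simp [opow_zero]) with h | h
    · left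
      have : A ∩ Iio (ω ^ (0 : Ordinal.{u})) = Iio (ω ^ (0 : Ordinal.{u})) := by
        refine le_antisymm inter_subset_right fun x hx => ⟨?_, hx⟩
        have : x = 0 := by
          rw [opow_zero] at hx
          exact Ordinal.lt_one_iff_zero.1 hx
        rwa [this]
      rw [this, tp_Iio]
    · right
      have : B ∩ Iio (ω ^ (0 : Ordinal.{u})) = Iio (ω ^ (0 : Ordinal.{u})) := by
        refine le_antisymm inter_subset_right fun x hx => ⟨?_, hx⟩
        have : x = 0 := by
          rw [opow_zero] at hx
          exact Ordinal.lt_one_iff_zero.1 hx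
        rwa [this]
      rw [this, tp_Iio]
  · -- successor case
    intro A B hcov
    set μ : Ordinal.{u} := ω ^ d with hμdef
    have hBlkIio : ∀ k : ℕ, Ico (μ * k) (μ * (k + 1)) ⊆ Iio (ω ^ Order.succ d) := by
      intro k x hx
      have h1 : (μ : Ordinal.{u}) * ((k : Ordinal.{u}) + 1) ≤ μ * ω :=
        mul_le_mul_right (le_of_lt (by exact_mod_cast nat_lt_omega0 (k + 1))) μ
      have : x < μ * ω := lt_of_lt_of_le hx.2 h1
      rwa [← opow_succ] at this
    have hdico : ∀ k : ℕ, tp (A ∩ Ico (μ * k) (μ * (k + 1))) = Ordinal.lift.{u+1} μ ∨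
        tp (B ∩ Ico (μ * k) (μ * (k + 1))) = Ordinal.lift.{u+1} μ := by
      intro k
      exact cov2_of_covP (IH d (Order.lt_succ d)) (tp_block μ k)
        (fun x hx => hcov (hBlkIio k hx))
    by_cases hSA : {k : ℕ | tp (A ∩ Ico (μ * k) (μ * (k + 1))) =
        Ordinal.lift.{u+1} μ}.Infinite
    · exact Or.inl (glue hSA)
    · refine Or.inr (glue ?_)
      have hfin := Set.not_infinite.1 hSA
      refine Set.Infinite.mono ?_ hfin.infinite_compl
      intro k hk
      exact (hdico k).resolve_left hk
  · -- limit case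
    intro A B hcov
    by_cases hA : tp (A ∩ Iio (ω ^ e)) = Ordinal.lift.{u+1} (ω ^ e)
    · exact Or.inl hA
    right
    have hAle : tp (A ∩ Iio (ω ^ e)) ≤ Ordinal.lift.{u+1} (ω ^ e) :=
      (tps_mono _ inter_subset_right).trans_eq (tp_Iio _)
    have hAlt : tp (A ∩ Iio (ω ^ e)) < Ordinal.lift.{u+1} (ω ^ e) := hAle.lt_of_ne hA
    -- find cA < e with tp (A ∩ Iio (ω ^ e)) < lift (ω ^ cA)
    obtain ⟨cA, hcAe, hcA⟩ : ∃ cA : Ordinal.{u}, cA < e ∧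
        tp (A ∩ Iio (ω ^ e)) < Ordinal.lift.{u+1} (ω ^ cA) := by
      obtain ⟨a', ha'⟩ := Ordinal.mem_range_lift_of_le hAle
      have ha'lt : a' < ω ^ e := by
        rw [← Ordinal.lift_lt.{u+1}, ha']
        exact hAlt
      rcases eq_or_ne a' 0 with h0 | h0
      · refine ⟨0, he.pos, ?_⟩
        rw [← ha', h0, lift_zero, opow_zero, lift_one]
        exact zero_lt_one
      · refine ⟨Order.succ (log ω a'), he.succ_lt ((lt_opow_iff_log_lt one_lt_omega0 h0).1 ha'lt),
          ?_⟩
        rw [← ha', Ordinal.lift_lt]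
        exact lt_opow_succ_log_self one_lt_omega0 a'
    have hBc : ∀ c < e, Ordinal.lift.{u+1} (ω ^ c) ≤ tp (B ∩ Iio (ω ^ e)) := by
      intro c hc
      have hdd : max cA c + 1 < e := he.succ_lt (max_lt hcAe hc)
      have hsub : Iio (ω ^ (max cA c + 1)) ⊆ A ∪ B := fun x hx =>
        hcov (lt_of_lt_of_le hx (opow_le_opow_right omega0_pos hdd.le))
      rcases IH _ hdd A B hsub with h | h
      · exfalso
        have hmono : tp (A ∩ Iio (ω ^ (max cA c + 1))) ≤ tp (A ∩ Iio (ω ^ e)) :=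
          tps_mono _ (inter_subset_inter_right _
            (Iio_subset_Iio (opow_le_opow_right omega0_pos hdd.le)))
        have h5 : Ordinal.lift.{u+1} (ω ^ cA) ≤ Ordinal.lift.{u+1} (ω ^ (max cA c + 1)) := by
          refine lift_le.2 (opow_le_opow_right omega0_pos ?_)
          exact le_trans (le_max_left _ _) (le_of_lt (lt_add_one _))
        rw [h] at hmono
        exact absurd (h5.trans hmono) (not_le.2 hcA)
      · refine le_trans ?_ ((le_of_eq h.symm).trans (tps_mono _
          (inter_subset_inter_right _
            (Iio_subset_Iio (opow_le_opow_right omega0_pos hdd.le)))))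
        refine lift_le.2 (opow_le_opow_right omega0_pos ?_)
        exact le_trans (le_max_right _ _) (le_of_lt (lt_add_one _))
    refine le_antisymm ((tps_mono _ inter_subset_right).trans_eq (tp_Iio _)) ?_
    refine le_of_forall_lt fun x hx => ?_
    obtain ⟨x', hx'⟩ := Ordinal.mem_range_lift_of_le hx.le
    have hx'lt : x' < ω ^ e := by
      rw [← Ordinal.lift_lt.{u+1}, hx']
      exact hx
    have hex : ∃ c < e, x' < ω ^ c := by
      by_contra hcon
      push_neg at hcon
      exact absurd ((opow_le_of_isSuccLimit omega0_ne_zero he).2 hcon) (not_le.2 hx'lt)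
    obtain ⟨c, hce, hc⟩ := hex
    calc x = Ordinal.lift.{u+1} x' := hx'.symm
      _ < Ordinal.lift.{u+1} (ω ^ c) := Ordinal.lift_lt.2 hc
      _ ≤ tp (B ∩ Iio (ω ^ e)) := hBc c hce

theorem covN {e : Ordinal.{u}} : ∀ (n : ℕ) (C : Set Ordinal.{u}),
    tp C = Ordinal.lift.{u+1} (ω ^ e) → ∀ P : Fin n → Set Ordinal.{u}, (C ⊆ ⋃ i, P i) →
    ∃ i, tp (P i ∩ C) = Ordinal.lift.{u+1} (ω ^ e) := by
  intro n
  induction n with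
  | zero =>
    intro C hC P hcov
    exfalso
    have hCempty : C = ∅ := by
      refine eq_empty_of_subset_empty (hcov.trans ?_)
      simp
    rw [hCempty] at hC
    have : tp (∅ : Set Ordinal.{u}) = 0 :=
      type_eq_zero_iff_isEmpty.2 ⟨fun x => x.2⟩
    rw [this] at hC
    have hpos : (0 : Ordinal.{u+1}) < Ordinal.lift.{u+1} (ω ^ e) := by
      have h1 : Ordinal.lift.{u+1} 0 < Ordinal.lift.{u+1} (ω ^ e) :=
        Ordinal.lift_lt.2 (opow_pos e omega0_pos)
      rwa [lift_zero] at h1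
    rw [← hC] at hpos
    exact lt_irrefl _ hpos

  | succ n ihn =>
    intro C hC P hcov
    have hcov2 : C ⊆ P (Fin.last n) ∪ ⋃ i : Fin n, P i.castSucc := by
      intro x hx
      obtain ⟨i, hi⟩ := mem_iUnion.1 (hcov hx)
      rcases Fin.eq_castSucc_or_eq_last i with ⟨j, rfl⟩ | rfl
      · exact Or.inr (mem_iUnion.2 ⟨j, hi⟩)
      · exact Or.inl hi
    rcases cov2_of_covP (covP_all e) hC hcov2 with h | h
    · exact ⟨Fin.last n, h⟩
    · obtain ⟨i, hi⟩ := ihn ((⋃ i : Fin n, P i.castSucc) ∩ C) h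
        (fun i => P i.castSucc) (fun x hx => hx.1)
      refine ⟨i.castSucc, le_antisymm ((tps_mono _ inter_subset_right).trans_eq hC) ?_⟩
      rw [← hi]
      exact tps_mono _ (fun x hx => ⟨hx.1, hx.2.2⟩)

end OrdArrowAux

namespace OrdArrowAux
open Ordinal Set

theorem key_lower {α β : Ordinal.{u}} {n : ℕ} (c : ↥(Set.Iio α) → Fin n)
    (hwo : IsWellOrder (↥(Set.Iio α)) (pieceOrder c))
    (htype : @Ordinal.type _ (pieceOrder c) hwo = Ordinal.lift.{u + 1} β)
    {e : Ordinal.{u}} {m : ℕ} (hmα : (ω ^ e) * (m : Ordinal.{u}) ≤ α) :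
    (ω ^ e) * (m : Ordinal.{u}) ≤ β := by
  haveI := hwo
  set μ : Ordinal.{u} := ω ^ e with hμ
  -- the pieces, as sets of ordinals
  set P : Fin n → Set Ordinal.{u} := fun i => {x | ∃ hx : x < α, c ⟨x, hx⟩ = i} with hP
  -- blocks lie below α
  have hblksub : ∀ k : ℕ, k < m → Ico (μ * (k : Ordinal.{u})) (μ * ((k : Ordinal.{u}) + 1)) ⊆
      Iio α := by
    intro k hk x hx
    have h1 : ((k : Ordinal.{u}) + 1) ≤ (m : Ordinal.{u}) := by
      exact_mod_cast Nat.succ_le_of_lt hk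
    calc x < μ * ((k : Ordinal.{u}) + 1) := hx.2
      _ ≤ μ * (m : Ordinal.{u}) := mul_le_mul_right h1 μ
      _ ≤ α := hmα
  -- each block is fully covered (in order type) by one piece
  have hfull : ∀ k : Fin m, ∃ i : Fin n,
      tp (P i ∩ Ico (μ * ((k : ℕ) : Ordinal.{u})) (μ * (((k : ℕ) : Ordinal.{u}) + 1))) =
        Ordinal.lift.{u+1} (ω ^ e) := by
    intro k
    refine covN n _ ?_ P ?_
    · rw [← hμ]
      exact tp_block μ ((k : ℕ) : Ordinal.{u})
    · intro x hx
      have hxα : x < α := hblksub (k : ℕ) k.isLt hx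
      exact mem_iUnion.2 ⟨c ⟨x, hxα⟩, ⟨hxα, rfl⟩⟩
  choose I hI using hfull
  -- sort the blocks by piece index
  set g : Fin m → Lex (Fin n × Fin m) := fun k => toLex (I k, k) with hg
  have hginj : Function.Injective g := by
    intro a b hab
    have := congrArg (fun p => (ofLex p).2) hab
    simpa [hg] using this
  set π := Tuple.sort g with hπ
  have hstrict : StrictMono (g ∘ π) :=
    (Tuple.monotone_sort g).strictMono_of_injective (hginj.comp π.injective)
  -- the pieces of the blocks, inside the subtype
  set QS : Fin m → Set (↥(Set.Iio α)) := fun k =>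
    {x | x.1 ∈ P (I k) ∩ Ico (μ * ((k : ℕ) : Ordinal.{u})) (μ * (((k : ℕ) : Ordinal.{u}) + 1))}
    with hQS
  have hcQS : ∀ (k : Fin m) (x : ↥(Set.Iio α)), x ∈ QS k → c x = I k := by
    rintro k x ⟨⟨hxα, hcx⟩, _⟩
    exact hcx
  have htq : ∀ k : Fin m, Ordinal.type (Subrel (pieceOrder c) (· ∈ QS k)) =
      Ordinal.lift.{u+1} (ω ^ e) := by
    intro k
    rw [← hI k]
    refine Ordinal.type_eq.2 ⟨RelIso.mk
      ⟨(fun x : ↥(QS k) =>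
        (⟨x.1.1, x.2⟩ : ↥(P (I k) ∩ Ico (μ * ((k : ℕ) : Ordinal.{u}))
          (μ * (((k : ℕ) : Ordinal.{u}) + 1))))),
       (fun y => ⟨⟨y.1, hblksub (k : ℕ) k.isLt y.2.2⟩, y.2⟩),
       (fun x => Subtype.ext (Subtype.ext rfl)),
       (fun y => Subtype.ext rfl)⟩ ?_⟩
    intro a b
    constructor
    · intro hab
      exact Or.inr ⟨by rw [hcQS k a a.2, hcQS k b b.2], hab⟩
    · intro hab
      rcases hab with hc | ⟨_, hv⟩
      · rw [hcQS k a a.2, hcQS k b b.2] at hc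
        exact absurd hc (lt_irrefl _)
      · exact hv
  -- accumulate the sorted blocks
  set W : ℕ → Set (↥(Set.Iio α)) := fun l => {x | ∃ j : Fin m, (j : ℕ) < l ∧ x ∈ QS (π j)}
    with hW
  have hWlb : ∀ l : ℕ, l ≤ m →
      Ordinal.lift.{u+1} (ω ^ e) * (l : Ordinal.{u+1}) ≤
        Ordinal.type (Subrel (pieceOrder c) (· ∈ W l)) := by
    intro l
    induction l with
    | zero => intro _; simp
    | succ l ih =>
      intro hl1
      have hlm : l < m := hl1
      have hsplit : W (l + 1) = W l ∪ QS (π ⟨l, hlm⟩) := by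
        ext x
        simp only [hW, mem_setOf_eq, mem_union, Nat.lt_succ_iff_lt_or_eq]
        constructor
        · rintro ⟨j, hj | hj, hx⟩
          · exact Or.inl ⟨j, hj, hx⟩
          · have : j = ⟨l, hlm⟩ := Fin.ext hj
            rw [this] at hx
            exact Or.inr hx
        · rintro (⟨j, hj, hx⟩ | hx)
          · exact ⟨j, Or.inl hj, hx⟩
          · exact ⟨⟨l, hlm⟩, Or.inr rfl, hx⟩
      have hsep : ∀ s ∈ W l, ∀ t ∈ QS (π ⟨l, hlm⟩), pieceOrder c s t := by
        rintro s ⟨j, hjl, hs⟩ t ht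
        have hj' : j < (⟨l, hlm⟩ : Fin m) := by
          rw [Fin.lt_def]
          exact hjl
        have hlex := hstrict hj'
        rw [Function.comp_apply, Function.comp_apply, hg] at hlex
        rcases Prod.Lex.lt_iff.1 hlex with hc | ⟨hc, hv⟩
        · exact Or.inl (by rw [hcQS _ s hs, hcQS _ t ht]; exact hc)
        · have hc' : I (π j) = I (π ⟨l, hlm⟩) := hc
          have hv' : π j < π ⟨l, hlm⟩ := hv
          refine Or.inr ⟨by rw [hcQS _ s hs, hcQS _ t ht]; exact hc', ?_⟩
          have h1 : ((π j : ℕ) : Ordinal.{u}) + 1 ≤ ((π ⟨l, hlm⟩ : ℕ) : Ordinal.{u}) := by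
            exact_mod_cast Nat.succ_le_of_lt hv'
          calc s.1 < μ * (((π j : ℕ) : Ordinal.{u}) + 1) := hs.2.2
            _ ≤ μ * ((π ⟨l, hlm⟩ : ℕ) : Ordinal.{u}) := mul_le_mul_right h1 μ
            _ ≤ t.1 := ht.2.1
      calc Ordinal.lift.{u+1} (ω ^ e) * ((l + 1 : ℕ) : Ordinal.{u+1})
          = Ordinal.lift.{u+1} (ω ^ e) * (l : Ordinal.{u+1}) + Ordinal.lift.{u+1} (ω ^ e) := by
            push_cast
            rw [mul_add, mul_one]
        _ ≤ Ordinal.type (Subrel (pieceOrder c) (· ∈ W l)) +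
              Ordinal.type (Subrel (pieceOrder c) (· ∈ QS (π ⟨l, hlm⟩))) :=
            add_le_add (ih (Nat.le_of_succ_le hl1)) (le_of_eq (htq _).symm)
        _ ≤ Ordinal.type (Subrel (pieceOrder c) (· ∈ W (l + 1))) := by
            rw [hsplit]
            exact tps_union_ge _ hsep
  have hfin : Ordinal.lift.{u+1} (ω ^ e) * (m : Ordinal.{u+1}) ≤ Ordinal.lift.{u+1} β := by
    calc Ordinal.lift.{u+1} (ω ^ e) * (m : Ordinal.{u+1})
        ≤ Ordinal.type (Subrel (pieceOrder c) (· ∈ W m)) := hWlb m le_rfl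
      _ ≤ Ordinal.type (pieceOrder c) := (Subrel.relEmbedding _ _).ordinal_type_le
      _ = Ordinal.lift.{u+1} β := htype
  have : Ordinal.lift.{u+1} ((ω ^ e) * (m : Ordinal.{u})) ≤ Ordinal.lift.{u+1} β := by
    rwa [lift_mul, lift_natCast]
  exact lift_le.1 this

end OrdArrowAux

open Ordinal OrdArrowAux in
theorem ordArrow_decomposition (α β : Ordinal.{u})
    (h : OrdArrow α β) (hlt : β < α) :
    ∃ γ1 γ2 : Ordinal.{u}, γ1 + γ2 = α ∧ γ2 + γ1 = β := by
  obtain ⟨n, c, hwo, htype⟩ := h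
  have hα0 : α ≠ 0 := fun h0 => not_lt_zero (a := β) (h0 ▸ hlt)
  set e : Ordinal.{u} := log ω α with he
  set μ : Ordinal.{u} := ω ^ e with hμ
  have hμ0 : μ ≠ 0 := opow_ne_zero e omega0_ne_zero
  have hμα : μ ≤ α := opow_log_le_self ω hα0
  have hαlt : α < μ * ω := by
    have h1 := lt_opow_succ_log_self one_lt_omega0 α
    rwa [opow_succ] at h1
  obtain ⟨m, hm⟩ := lt_omega0.1 ((div_lt hμ0).2 hαlt)
  have hm1 : (1 : Ordinal.{u}) ≤ α / μ := (le_div hμ0).2 (by rwa [mul_one])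
  have hαm : α < μ * (α / μ) + μ := by
    conv_lhs => rw [← div_add_mod α μ]
    exact add_lt_add_right (mod_lt α hμ0) _
  have hmain : μ * (α / μ) ≤ β := by
    rw [hm]
    exact key_lower c hwo htype (by rw [← hm]; exact mul_div_le α μ)
  refine ⟨β, α - β, Ordinal.add_sub_cancel_of_le hlt.le, ?_⟩
  have hρ : α - β < μ := by
    by_contra hcon
    push_neg at hcon
    have hcontr : α < α :=
      calc α < μ * (α / μ) + μ := hαm
        _ ≤ β + μ := add_le_add_left hmain μ
        _ ≤ β + (α - β) := add_le_add_right hcon β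
        _ = α := Ordinal.add_sub_cancel_of_le hlt.le
    exact lt_irrefl α hcontr
  have hμβ : μ ≤ β := by
    calc μ = μ * 1 := (mul_one μ).symm
      _ ≤ μ * (α / μ) := mul_le_mul_right hm1 μ
      _ ≤ β := hmain
  calc (α - β) + β = (α - β) + (μ + (β - μ)) := by
        rw [Ordinal.add_sub_cancel_of_le hμβ]
    _ = ((α - β) + μ) + (β - μ) := (add_assoc _ _ _).symm
    _ = μ + (β - μ) := by
        rw [hμ] at hρ ⊢
        rw [add_omega0_opow hρ]
    _ = β := Ordinal.add_sub_cancel_of_le hμβ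
end

section
/- Let (M, +) be a finite semigroup and t : Ordinals → M a function such that t(δ1 + δ2) = t(δ1) + t(δ2) for all ordinals δ1, δ2 under consideration, and such that t(ω^{m}) absorbs ω-fold sums, i.e. t(λ) = Σ_{i<ω} t of the summands for limit decompositions. If there exist 1 ≤ p < s with t(ω^p) = t(ω^s), then t(ω^r) = t(ω^p) for all r ≥ p, and moreover t(ω^p) + t(ω^p) = t(ω^p). -/
open Ordinal

/-- In a finite semigroup `M` of "theories", with `t` an additive assignment of
theories to ordinals whose interaction with `ω`-fold sums is recorded by
`σ : M → M` (namely `t (δ * ω) = σ (t δ)`, expressing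
`t(ω^{r+1}) = Σ_{i<ω} t(ω^r)` and its variants), if `t (ω^p) = t (ω^s)` for
some `1 ≤ p < s`, then `t (ω^r) = t (ω^p)` for all `r ≥ p`, and `t (ω^p)` is
idempotent. -/
theorem theory_of_omega_powers_stabilizes {M : Type*} [Fintype M] [AddSemigroup M]
    (σ : M → M) (t : Ordinal → M)
    (hadd : ∀ δ1 δ2 : Ordinal, t (δ1 + δ2) = t δ1 + t δ2)
    (homega : ∀ δ : Ordinal, t (δ * Ordinal.omega0) = σ (t δ))
    (p s : ℕ) (hp : 1 ≤ p) (hps : p < s)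
    (hts : t (Ordinal.omega0 ^ (p : Ordinal)) = t (Ordinal.omega0 ^ (s : Ordinal))) :
    (∀ r : ℕ, p ≤ r →
      t (Ordinal.omega0 ^ (r : Ordinal)) = t (Ordinal.omega0 ^ (p : Ordinal))) ∧
    t (Ordinal.omega0 ^ (p : Ordinal)) + t (Ordinal.omega0 ^ (p : Ordinal)) =
      t (Ordinal.omega0 ^ (p : Ordinal)) := by
  set a : ℕ → M := fun r => t (Ordinal.omega0 ^ (r : Ordinal)) with ha
  -- ordinal absorption : ω^r + ω^m = ω^m for r < m
  have habs : ∀ r m : ℕ, r < m →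
      (Ordinal.omega0 ^ (r : Ordinal)) + Ordinal.omega0 ^ (m : Ordinal)
        = Ordinal.omega0 ^ (m : Ordinal) := by
    intro r m h
    exact add_omega0_opow ((opow_lt_opow_iff_right one_lt_omega0).2 (by exact_mod_cast h))
  -- F2 : absorption in M
  have hF2 : ∀ r m : ℕ, r < m → a r + a m = a m := by
    intro r m h
    show t _ + t _ = t _
    rw [← hadd, habs r m h]
  -- F1 : a (r+1) = σ (a r)
  have hF1 : ∀ r : ℕ, a (r + 1) = σ (a r) := by
    intro r
    have hc : ((r + 1 : ℕ) : Ordinal) = (r : Ordinal) + 1 := by push_cast; ring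
    show t (Ordinal.omega0 ^ ((r + 1 : ℕ) : Ordinal)) = σ (t _)
    rw [hc, opow_add, opow_one, homega]
  -- Step 1 : periodicity a (p+k) = a (s+k)
  have hper : ∀ k : ℕ, a (p + k) = a (s + k) := by
    intro k
    induction k with
    | zero => exact hts
    | succ n ih =>
        have h1 : p + (n + 1) = (p + n) + 1 := by omega
        have h2 : s + (n + 1) = (s + n) + 1 := by omega
        rw [h1, h2, hF1, hF1, ih]
  -- Step 2 : a (p + k*(s-p)) = a p
  have hper2 : ∀ k : ℕ, a (p + k * (s - p)) = a p := by
    intro k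
    induction k with
    | zero => simp
    | succ n ih =>
        have haux : (n + 1) * (s - p) = n * (s - p) + (s - p) := by ring_nf
        have h1 : p + (n + 1) * (s - p) = s + n * (s - p) := by omega
        rw [h1, ← hper (n * (s - p)), ih]
  -- Step 4 : a r + a p = a p for all r
  have hstep4 : ∀ r : ℕ, a r + a p = a p := by
    intro r
    have hd : 1 ≤ s - p := by omega
    have hm : r < p + (r + 1) * (s - p) := by nlinarith
    calc a r + a p = a r + a (p + (r + 1) * (s - p)) := by rw [hper2]
      _ = a (p + (r + 1) * (s - p)) := hF2 _ _ hm
      _ = a p := hper2 _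
  -- Step 5 : for r > p, a (r+1) = a (p+1)
  have hstep5 : ∀ r : ℕ, p < r → a (r + 1) = a (p + 1) := by
    intro r hr
    have hmul := add_mul_of_isSuccLimit (habs p r hr) isSuccLimit_omega0
    have h4 : t (Ordinal.omega0 ^ (r : Ordinal) + Ordinal.omega0 ^ (p : Ordinal))
        = t (Ordinal.omega0 ^ (p : Ordinal)) := by
      rw [hadd]; exact hstep4 r
    have hkey : σ (t (Ordinal.omega0 ^ (r : Ordinal)))
        = σ (t (Ordinal.omega0 ^ (p : Ordinal))) := by
      rw [← homega, ← homega, ← hmul, homega, h4, homega]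
    calc a (r + 1) = σ (a r) := hF1 r
      _ = σ (a p) := hkey
      _ = a (p + 1) := (hF1 p).symm
  -- main statement
  have hmain : ∀ r : ℕ, p ≤ r → a r = a p := by
    intro r hr
    have hsp1 : a s = a (p + 1) := by
      rcases Nat.eq_or_lt_of_le (Nat.succ_le_of_lt hps) with h' | h'
      · rw [← h']
      · obtain ⟨m, rfl⟩ : ∃ m, s = m + 1 := ⟨s - 1, by omega⟩
        exact hstep5 m (by omega)
    have hap : a p = a (p + 1) := by
      calc a p = a s := hts
        _ = a (p + 1) := hsp1
    rcases Nat.eq_or_lt_of_le hr with h | h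
    · rw [h]
    · rcases Nat.eq_or_lt_of_le (Nat.succ_le_of_lt h) with h' | h'
      · rw [← h', ← hap]
      · obtain ⟨m, rfl⟩ : ∃ m, r = m + 1 := ⟨r - 1, by omega⟩
        rw [hstep5 m (by omega), ← hap]
  refine ⟨fun r hr => hmain r hr, ?_⟩
  calc t (Ordinal.omega0 ^ (p : Ordinal)) + t (Ordinal.omega0 ^ (p : Ordinal))
      = t (Ordinal.omega0 ^ (p : Ordinal)) + t (Ordinal.omega0 ^ (s : Ordinal)) := by
        rw [← hts]
    _ = t (Ordinal.omega0 ^ (s : Ordinal)) := hF2 p s hps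
    _ = t (Ordinal.omega0 ^ (p : Ordinal)) := hts.symm
end

section
/- Every partial order P can be embedded into a partial order Q such that the image of P admits a well-ordering definable from the order of Q by a first-order formula with parameters from Q. -/
set_option linter.unusedSectionVars false

open FirstOrder Language Sum

universe u
variable {P : Type u} [PartialOrder P]

/-- auxiliary: the extended order -/
def MyQ (P : Type u) : Type u := Option (P ⊕ P ⊕ P)

namespace MyQ
variable {P : Type u} [PartialOrder P]

def pt (a : P) : MyQ P := some (inl a)
def wt (i : P) : MyQ P := some (inr (inl i))
def zt (q : P) : MyQ P := some (inr (inr q))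
def c0 : MyQ P := none

def qle : MyQ P → MyQ P → Prop
  | some (inl a), some (inl b) => a ≤ b
  | some (inl a), some (inr (inr q)) => a ≤ q
  | some (inr (inl i)), some (inr (inl j)) => i = j ∨ WellOrderingRel i j
  | some (inr (inl i)), some (inr (inr q)) => i = q ∨ WellOrderingRel i q
  | some (inr (inl _)), none => True
  | some (inr (inr p)), some (inr (inr q)) => p = q
  | none, none => True
  | _, _ => False

lemma rtrans {i j k : P} (h : WellOrderingRel i j) (h' : WellOrderingRel j k) :
    WellOrderingRel i k := _root_.trans h h'

lemma rirrefl {i : P} (h : WellOrderingRel i i) : False :=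
  irrefl_of (WellOrderingRel : P → P → Prop) i h

instance : PartialOrder (MyQ P) where
  le := qle
  le_refl x := by
    rcases x with _ | (a | i | q) <;> simp [qle]
  le_trans x y z hxy hyz := by
    rcases x with _ | (a | i | q) <;> rcases y with _ | (b | j | p) <;>
      rcases z with _ | (c | k | s) <;>
      simp only [qle] at * <;>
      first
        | trivial
        | (exact le_trans hxy hyz)
        | (subst hxy; exact hyz)
        | (subst hyz; exact hxy)
        | (rcases hxy with rfl | hxy
           · exact hyz
           rcases hyz with rfl | hyz
           · exact Or.inr hxy
           exact Or.inr (rtrans hxy hyz))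
  le_antisymm x y hxy hyx := by
    rcases x with _ | (a | i | q) <;> rcases y with _ | (b | j | p) <;>
      simp only [qle] at * <;>
      first
        | trivial
        | (exact congrArg _ (congrArg _ (le_antisymm hxy hyx)))
        | (rcases hxy with rfl | hxy
           · rfl
           rcases hyx with rfl | hyx
           · rfl
           exact absurd (rtrans hxy hyx) rirrefl)
        | (subst hxy; rfl)

end MyQ

namespace MyQ
variable {P : Type u} [PartialOrder P]

@[simp] lemma pt_le_pt {a b : P} : (pt a ≤ pt b) ↔ a ≤ b := Iff.rfl
@[simp] lemma pt_le_wt {a j : P} : (pt a ≤ wt j) ↔ False := Iff.rfl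
@[simp] lemma pt_le_zt {a q : P} : (pt a ≤ zt q) ↔ a ≤ q := Iff.rfl
@[simp] lemma pt_le_c0 {a : P} : (pt a ≤ c0) ↔ False := Iff.rfl
@[simp] lemma wt_le_pt {i b : P} : (wt i ≤ pt b) ↔ False := Iff.rfl
@[simp] lemma wt_le_wt {i j : P} : (wt i ≤ wt j) ↔ (i = j ∨ WellOrderingRel i j) := Iff.rfl
@[simp] lemma wt_le_zt {i q : P} : (wt i ≤ zt q) ↔ (i = q ∨ WellOrderingRel i q) := Iff.rfl
@[simp] lemma wt_le_c0 {i : P} : (wt i ≤ c0) ↔ True := Iff.rfl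
@[simp] lemma zt_le_pt {p b : P} : (zt p ≤ pt b) ↔ False := Iff.rfl
@[simp] lemma zt_le_wt {p j : P} : (zt p ≤ wt j) ↔ False := Iff.rfl
@[simp] lemma zt_le_zt {p q : P} : (zt p ≤ zt q) ↔ p = q := Iff.rfl
@[simp] lemma zt_le_c0 {p : P} : (zt p ≤ c0) ↔ False := Iff.rfl
@[simp] lemma c0_le_pt {b : P} : ((c0 : MyQ P) ≤ pt b) ↔ False := Iff.rfl
@[simp] lemma c0_le_wt {j : P} : ((c0 : MyQ P) ≤ wt j) ↔ False := Iff.rfl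
@[simp] lemma c0_le_zt {q : P} : ((c0 : MyQ P) ≤ zt q) ↔ False := Iff.rfl
@[simp] lemma c0_le_c0 : ((c0 : MyQ P) ≤ c0) ↔ True := Iff.rfl

lemma cases' (x : MyQ P) : (∃ a, x = pt a) ∨ (∃ i, x = wt i) ∨ (∃ s, x = zt s) ∨ x = c0 := by
  rcases x with _ | (a | i | s)
  · exact Or.inr (Or.inr (Or.inr rfl))
  · exact Or.inl ⟨a, rfl⟩
  · exact Or.inr (Or.inl ⟨i, rfl⟩)
  · exact Or.inr (Or.inr (Or.inl ⟨s, rfl⟩))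

@[simp] lemma pt_inj {a b : P} : (pt a = pt b) ↔ a = b :=
  ⟨fun h => Sum.inl.inj (Option.some.inj h), fun h => h ▸ rfl⟩
@[simp] lemma wt_inj {a b : P} : (wt a = wt b) ↔ a = b :=
  ⟨fun h => Sum.inl.inj (Sum.inr.inj (Option.some.inj h)), fun h => h ▸ rfl⟩
@[simp] lemma zt_inj {a b : P} : (zt a = zt b) ↔ a = b :=
  ⟨fun h => Sum.inr.inj (Sum.inr.inj (Option.some.inj h)), fun h => h ▸ rfl⟩
@[simp] lemma pt_ne_wt {a b : P} : (pt a = wt b) ↔ False :=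
  ⟨fun h => (by simp [pt, wt, zt, c0] at h; cases h), False.elim⟩
@[simp] lemma pt_ne_zt {a b : P} : (pt a = zt b) ↔ False :=
  ⟨fun h => (by simp [pt, wt, zt, c0] at h; cases h), False.elim⟩
@[simp] lemma wt_ne_zt {a b : P} : (wt a = zt b) ↔ False :=
  ⟨fun h => (by simp [pt, wt, zt, c0] at h; cases h), False.elim⟩
@[simp] lemma wt_ne_pt {a b : P} : (wt a = pt b) ↔ False :=
  ⟨fun h => (by simp [pt, wt, zt, c0] at h; cases h), False.elim⟩
@[simp] lemma zt_ne_pt {a b : P} : (zt a = pt b) ↔ False :=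
  ⟨fun h => (by simp [pt, wt, zt, c0] at h; cases h), False.elim⟩
@[simp] lemma zt_ne_wt {a b : P} : (zt a = wt b) ↔ False :=
  ⟨fun h => (by simp [pt, wt, zt, c0] at h; cases h), False.elim⟩
@[simp] lemma wt_ne_c0 {a : P} : (wt a = c0) ↔ False :=
  ⟨fun h => by simp [pt, wt, zt, c0] at h, False.elim⟩
@[simp] lemma pt_ne_c0 {a : P} : (pt a = c0) ↔ False :=
  ⟨fun h => by simp [pt, wt, zt, c0] at h, False.elim⟩
@[simp] lemma zt_ne_c0 {a : P} : (zt a = c0) ↔ False :=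
  ⟨fun h => by simp [pt, wt, zt, c0] at h, False.elim⟩
@[simp] lemma c0_ne_pt {a : P} : ((c0 : MyQ P) = pt a) ↔ False :=
  ⟨fun h => by simp [pt, wt, zt, c0] at h, False.elim⟩
@[simp] lemma c0_ne_wt {a : P} : ((c0 : MyQ P) = wt a) ↔ False :=
  ⟨fun h => by simp [pt, wt, zt, c0] at h, False.elim⟩
@[simp] lemma c0_ne_zt {a : P} : ((c0 : MyQ P) = zt a) ↔ False :=
  ⟨fun h => by simp [pt, wt, zt, c0] at h, False.elim⟩
/-- semantic version of subformula A -/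
def SA (z x : MyQ P) : Prop :=
  x ≤ z ∧ ¬ x = z ∧ ∀ u, u ≤ z → ¬ u = z → (u ≤ c0 ∨ u ≤ x)

/-- semantic version of subformula B -/
def SB (z w : MyQ P) : Prop :=
  w ≤ z ∧ w ≤ c0 ∧ ∀ v, v ≤ z → v ≤ c0 → v ≤ w

lemma sab_iff (p : P) (z w : MyQ P) :
    (SA z (pt p) ∧ SB z w) ↔ (z = zt p ∧ w = wt p) := by
  constructor
  · rintro ⟨⟨hpz, -, hA⟩, ⟨hwz, hwc, hB⟩⟩
    rcases cases' z with ⟨b, rfl⟩ | ⟨j, rfl⟩ | ⟨s, rfl⟩ | rfl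
    · -- z = pt b : then w ≤ pt b forces w a pt, contradicting w ≤ c0
      exfalso
      rcases cases' w with ⟨wb, rfl⟩ | ⟨wj, rfl⟩ | ⟨ws, rfl⟩ | rfl
      · simp at hwc
      · simp at hwz
      · simp at hwz
      · simp at hwz
    · simp at hpz
    · -- z = zt s
      have hps : p ≤ s := pt_le_zt.mp hpz
      have hsp : s ≤ p := by
        have := hA (pt s) (by simp) (by simp)
        rcases this with h | h
        · simp at h
        · exact pt_le_pt.mp h
      have hsp' : s = p := le_antisymm hsp hps
      subst hsp'
      refine ⟨rfl, ?_⟩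
      rcases cases' w with ⟨wb, rfl⟩ | ⟨wj, rfl⟩ | ⟨ws, rfl⟩ | rfl
      · simp at hwc
      · -- w = wt wj
        have h1 : wj = s ∨ WellOrderingRel wj s := wt_le_zt.mp hwz
        have h2 : s = wj ∨ WellOrderingRel s wj := by
          have := hB (wt s) (by simp) (by simp)
          exact wt_le_wt.mp this
        rcases h1 with rfl | h1
        · rfl
        rcases h2 with rfl | h2
        · rfl
        · exact absurd (rtrans h1 h2) rirrefl
      · simp at hwc
      · simp at hwz
    · simp at hpz
  · rintro ⟨rfl, rfl⟩
    refine ⟨⟨by simp, by simp, ?_⟩, by simp, by simp, ?_⟩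
    · intro u hu hne
      rcases cases' u with ⟨b, rfl⟩ | ⟨j, rfl⟩ | ⟨s, rfl⟩ | rfl
      · exact Or.inr (by simpa using hu)
      · exact Or.inl (by simp)
      · exact absurd (by simpa using hu : s = p) (by simpa using hne)
      · simp at hu
    · intro v hv hvc
      rcases cases' v with ⟨b, rfl⟩ | ⟨j, rfl⟩ | ⟨s, rfl⟩ | rfl
      · simp at hvc
      · simpa using hv
      · simp at hvc
      · simp at hv

lemma key (p q : P) :
    (∃ z z' w w' : MyQ P, (SA z (pt p) ∧ SB z w) ∧ (SA z' (pt q) ∧ SB z' w')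
      ∧ (w ≤ w' ∧ ¬ w = w')) ↔ WellOrderingRel p q := by
  constructor
  · rintro ⟨z, z', w, w', h1, h2, hle, hne⟩
    obtain ⟨rfl, rfl⟩ := (sab_iff p z w).mp h1
    obtain ⟨rfl, rfl⟩ := (sab_iff q z' w').mp h2
    rcases (wt_le_wt).mp hle with rfl | h
    · exact absurd rfl hne
    · exact h
  · intro h
    refine ⟨zt p, zt q, wt p, wt q, (sab_iff p _ _).mpr ⟨rfl, rfl⟩,
      (sab_iff q _ _).mpr ⟨rfl, rfl⟩, Or.inr h, ?_⟩
    simp only [wt_inj]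
    rintro rfl
    exact rirrefl h

end MyQ


section Formula
open Term

/-- parameter c0 -/
def vc (n : ℕ) : Language.order.Term ((Fin 1 ⊕ Fin 2) ⊕ Fin n) := var (inl (inl 0))
def vx (n : ℕ) : Language.order.Term ((Fin 1 ⊕ Fin 2) ⊕ Fin n) := var (inl (inr 0))
def vy (n : ℕ) : Language.order.Term ((Fin 1 ⊕ Fin 2) ⊕ Fin n) := var (inl (inr 1))
def vb (n : ℕ) (k : Fin n) : Language.order.Term ((Fin 1 ⊕ Fin 2) ⊕ Fin n) := var (inr k)

/-- formula A(z, x) where z is bound var index zi (< 4) and x a fixed term -/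
def fA (zi : Fin 4) (x4 : Language.order.Term ((Fin 1 ⊕ Fin 2) ⊕ Fin 4))
    (x5 : Language.order.Term ((Fin 1 ⊕ Fin 2) ⊕ Fin 5)) :
    Language.order.BoundedFormula (Fin 1 ⊕ Fin 2) 4 :=
  (x4.le (vb 4 zi)) ⊓ ∼(x4 =' (vb 4 zi)) ⊓
    ∀' (((vb 5 (Fin.last 4)).le (vb 5 zi.castSucc) ⊓ ∼((vb 5 (Fin.last 4)) =' (vb 5 zi.castSucc))) ⟹
      ((vb 5 (Fin.last 4)).le (vc 5) ⊔ (vb 5 (Fin.last 4)).le x5))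

/-- formula B(z, w), bound indices zi wi < 4 -/
def fB (zi wi : Fin 4) : Language.order.BoundedFormula (Fin 1 ⊕ Fin 2) 4 :=
  ((vb 4 wi).le (vb 4 zi)) ⊓ ((vb 4 wi).le (vc 4)) ⊓
    ∀' (((vb 5 (Fin.last 4)).le (vb 5 zi.castSucc) ⊓ (vb 5 (Fin.last 4)).le (vc 5)) ⟹ ((vb 5 (Fin.last 4)).le (vb 5 wi.castSucc)))

/-- the well-ordering formula: z=&0, z'=&1, w=&2, w'=&3 -/
def φwo : Language.order.Formula (Fin 1 ⊕ Fin 2) :=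
  ((fA 0 (vx 4) (vx 5) ⊓ fB 0 2) ⊓ (fA 1 (vy 4) (vy 5) ⊓ fB 1 (Fin.last 3)) ⊓
    ((vb 4 2).le (vb 4 (Fin.last 3)) ⊓ ∼((vb 4 2) =' (vb 4 (Fin.last 3))))).ex.ex.ex.ex

end Formula

section Realize
variable {M : Type*} [PartialOrder M]

theorem realize_φwo (cp : M) (x y : M) :
    letI := Language.orderStructure M
    φwo.Realize (Sum.elim (fun _ : Fin 1 => cp) ![x, y]) ↔
      ∃ z z' w w' : M,
        ((x ≤ z ∧ ¬ x = z ∧ ∀ u, u ≤ z → ¬ u = z → (u ≤ cp ∨ u ≤ x)) ∧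
          (w ≤ z ∧ w ≤ cp ∧ ∀ v, v ≤ z → v ≤ cp → v ≤ w)) ∧
        ((y ≤ z' ∧ ¬ y = z' ∧ ∀ u, u ≤ z' → ¬ u = z' → (u ≤ cp ∨ u ≤ y)) ∧
          (w' ≤ z' ∧ w' ≤ cp ∧ ∀ v, v ≤ z' → v ≤ cp → v ≤ w')) ∧
        (w ≤ w' ∧ ¬ w = w') := by
  letI := Language.orderStructure M
  haveI : Language.order.OrderedStructure M := ⟨fun _ => Iff.rfl⟩
  simp [φwo, fA, fB, vc, vx, vy, vb, Formula.Realize, Fin.snoc, Fin.val_last]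
  constructor
  · rintro ⟨a, b, c, d, ⟨⟨⟨u1, u2⟩, u3, u4⟩, ⟨⟨v1, v2⟩, v3, v4⟩⟩, h3⟩
    exact ⟨a, b, c, ⟨⟨u1.1, u1.2, u2⟩, u3.1, u3.2, u4⟩, d, ⟨⟨v1.1, v1.2, v2⟩, v3.1, v3.2, v4⟩, h3⟩
  · rintro ⟨a, b, c, ⟨⟨u1, u2, u3⟩, u4, u5, u6⟩, d, ⟨⟨v1, v2, v3⟩, v4, v5, v6⟩, h3⟩
    exact ⟨a, b, c, d, ⟨⟨⟨⟨u1, u2⟩, u3⟩, ⟨u4, u5⟩, u6⟩, ⟨⟨v1, v2⟩, v3⟩, ⟨v4, v5⟩, v6⟩, h3⟩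
end Realize


open MyQ in
/-- Every partial order `P` embeds into a partial order `Q` in which the image
of `P` admits a well-ordering definable by a first-order formula in the
language of order with finitely many parameters from `Q`. -/
theorem embed_into_definably_well_orderable (P : Type u) [PartialOrder P] :
    ∃ (Q : Type u) (_ : PartialOrder Q) (f : P → Q),
      (∀ a b : P, f a ≤ f b ↔ a ≤ b) ∧ Function.Injective f ∧
      ∃ (m : ℕ) (φ : Language.order.Formula (Fin m ⊕ Fin 2)) (c : Fin m → Q),
        IsWellOrder (↥(Set.range f))
          (fun x y : ↥(Set.range f) =>
            letI := Language.orderStructure Q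
            φ.Realize (Sum.elim c ![x.1, y.1])) := by
  classical
  have hinj : Function.Injective (pt : P → MyQ P) := fun a b h => pt_inj.mp h
  refine ⟨MyQ P, inferInstance, pt, fun a b => Iff.rfl, hinj, 1, φwo,
    fun _ => (c0 : MyQ P), ?_⟩
  letI := Language.orderStructure (MyQ P)
  set e := Equiv.ofInjective (pt : P → MyQ P) hinj with he
  have key2 : ∀ x y : ↥(Set.range (pt : P → MyQ P)),
      (φwo.Realize (Sum.elim (fun _ : Fin 1 => (c0 : MyQ P)) ![x.1, y.1]) ↔
        WellOrderingRel (e.symm x) (e.symm y)) := by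
    intro x y
    obtain ⟨p, hp⟩ := x.2
    obtain ⟨q, hq⟩ := y.2
    have hex : e.symm x = p := by
      have : e p = x := Subtype.ext hp
      rw [← this, Equiv.symm_apply_apply]
    have hey : e.symm y = q := by
      have : e q = y := Subtype.ext hq
      rw [← this, Equiv.symm_apply_apply]
    rw [hex, hey]
    refine (realize_φwo (c0 : MyQ P) x.1 y.1).trans ?_
    rw [show x.1 = pt p from hp.symm, show y.1 = pt q from hq.symm]
    exact key p q
  have hwo : IsWellOrder ↥(Set.range (pt : P → MyQ P))
      (fun x y => φwo.Realize (Sum.elim (fun _ : Fin 1 => (c0 : MyQ P)) ![x.1, y.1])) := by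
    exact RelEmbedding.isWellOrder
      (⟨⟨fun x => e.symm x, e.symm.injective⟩, fun {a b} => (key2 a b).symm⟩ :
        (fun x y : ↥(Set.range (pt : P → MyQ P)) =>
          φwo.Realize (Sum.elim (fun _ : Fin 1 => (c0 : MyQ P)) ![x.1, y.1])) ↪r
          (WellOrderingRel : P → P → Prop))
  exact hwo
end

section
/- Suppose a finite-partition reordering of α (comparing piece index first, then ordinal order within pieces) has order type β. Then α < ω^ω if and only if β < ω^ω, and for every k < ω, α ∈ [ω^k, ω^{k+1}) if and only if β ∈ [ω^k, ω^{k+1}). -/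
universe u

universe v

open Ordinal Set

namespace OrdArrowAux

/-- Natural (Hessenberg) addition. -/
noncomputable def nadd : Ordinal.{v} → Ordinal.{v} → Ordinal.{v}
  | a, b => max (⨆ x : Set.Iio a, Order.succ (nadd x.1 b))
      (⨆ y : Set.Iio b, Order.succ (nadd a y.1))
termination_by a b => (a, b)
decreasing_by
  all_goals simp_wf
  · exact Prod.Lex.left _ _ x.2
  · exact Prod.Lex.right _ y.2

infixl:65 " ♯ " => nadd

theorem nadd_def (a b : Ordinal.{v}) : a ♯ b =
    max (⨆ x : Set.Iio a, Order.succ (x.1 ♯ b)) (⨆ y : Set.Iio b, Order.succ (a ♯ y.1)) := by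
  rw [nadd]

theorem nadd_lt_nadd_right {a b : Ordinal.{v}} (h : a < b) (c : Ordinal.{v}) : a ♯ c < b ♯ c := by
  rw [nadd_def b c]
  exact (Order.lt_succ _).trans_le ((Ordinal.le_iSup
    (fun x : Set.Iio b => Order.succ (x.1 ♯ c)) ⟨a, h⟩).trans (le_max_left _ _))

theorem nadd_lt_nadd_left {b c : Ordinal.{v}} (h : b < c) (a : Ordinal.{v}) : a ♯ b < a ♯ c := by
  rw [nadd_def a c]
  exact (Order.lt_succ _).trans_le ((Ordinal.le_iSup
    (fun y : Set.Iio c => Order.succ (a ♯ y.1)) ⟨b, h⟩).trans (le_max_right _ _))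

theorem nadd_le_iff {a b c : Ordinal.{v}} :
    b ♯ c ≤ a ↔ (∀ b' < b, b' ♯ c < a) ∧ ∀ c' < c, b ♯ c' < a := by
  rw [nadd_def, max_le_iff, Ordinal.iSup_le_iff, Ordinal.iSup_le_iff]
  simp only [Order.succ_le_iff, Subtype.forall, Set.mem_Iio]

theorem nadd_comm : ∀ a b : Ordinal.{v}, a ♯ b = b ♯ a
  | a, b => by
    rw [nadd_def, nadd_def b a, max_comm]
    congr 1
    · exact iSup_congr fun y => by rw [nadd_comm a y.1]
    · exact iSup_congr fun x => by rw [nadd_comm x.1 b]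
termination_by a b => (a, b)
decreasing_by
  all_goals simp_wf
  · exact Prod.Lex.right _ y.2
  · exact Prod.Lex.left _ _ x.2

theorem nadd_zero (a : Ordinal.{v}) : a ♯ 0 = a := by
  induction a using Ordinal.induction with
  | h a IH =>
  apply le_antisymm
  · rw [nadd_le_iff]
    exact ⟨fun a' h => by rw [IH a' h]; exact h, fun c' h => absurd h (by simp)⟩
  · by_contra hc
    push_neg at hc
    have := nadd_lt_nadd_right hc 0
    rw [IH _ hc] at this
    exact lt_irrefl _ this

theorem nadd_le_nadd {a b c d : Ordinal.{v}} (h1 : a ≤ b) (h2 : c ≤ d) : a ♯ c ≤ b ♯ d := by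
  have e1 : a ♯ c ≤ b ♯ c := by
    rcases h1.lt_or_eq with h | h
    · exact (nadd_lt_nadd_right h c).le
    · rw [h]
  have e2 : b ♯ c ≤ b ♯ d := by
    rcases h2.lt_or_eq with h | h
    · exact (nadd_lt_nadd_left h b).le
    · rw [h]
  exact e1.trans e2

theorem nadd_lt_nadd_of_lt_of_le {a b c d : Ordinal.{v}} (h1 : a < b) (h2 : c ≤ d) :
    a ♯ c < b ♯ d :=
  (nadd_lt_nadd_right h1 c).trans_le (nadd_le_nadd le_rfl h2)

theorem nadd_lt_nadd_of_le_of_lt {a b c d : Ordinal.{v}} (h1 : a ≤ b) (h2 : c < d) :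
    a ♯ c < b ♯ d :=
  (nadd_le_nadd h1 le_rfl).trans_lt (nadd_lt_nadd_left h2 b)

instance subrelSetIsWellOrder {σ : Type*} (r : σ → σ → Prop) [IsWellOrder σ r] (S : Set σ) :
    IsWellOrder (Subtype S) (Subrel r S) :=
  (fun (p : σ → Prop) => (inferInstance : IsWellOrder (Subtype p) (Subrel r p))) S

/-- Iso between a nested subrelation and the subrelation on the intersection. -/
def subrelSubrelIso {σ : Type v} (r : σ → σ → Prop) (P S : Set σ) :
    Subrel (Subrel r P) {z : ↥P | z.1 ∈ S} ≃r Subrel r (P ∩ S : Set σ) :=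
  ⟨⟨fun z => ⟨z.1.1, z.1.2, z.2⟩, fun z => ⟨⟨z.1, z.2.1⟩, z.2.2⟩, fun _ => rfl, fun _ => rfl⟩,
    Iff.rfl⟩

theorem type_subrel_mono {σ : Type v} (r : σ → σ → Prop) [IsWellOrder σ r] {S T : Set σ}
    (h : S ⊆ T) : type (Subrel r S) ≤ type (Subrel r T) :=
  type_le_iff'.2 ⟨⟨⟨Set.inclusion h, Set.inclusion_injective h⟩, Iff.rfl⟩⟩

theorem type_subrel_inter_lt {σ : Type v} (r : σ → σ → Prop) [IsWellOrder σ r] {S : Set σ}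
    {x : σ} (hx : x ∈ S) :
    type (Subrel r (S ∩ {y | r y x} : Set σ)) < type (Subrel r S) := by
  have h2 : type (Subrel r (S ∩ {y | r y x} : Set σ))
      = type (Subrel (Subrel r S) {b | Subrel r S b ⟨x, hx⟩}) :=
    type_eq.2 ⟨(subrelSubrelIso r S {y | r y x}).symm⟩
  rw [h2]
  exact typein_lt_type _ _

theorem type_le_nadd_of_cover :
    ∀ (o : Ordinal.{v}) {σ : Type v} (r : σ → σ → Prop) [IsWellOrder σ r], type r = o →
      ∀ S T : Set σ, (∀ x, x ∈ S ∨ x ∈ T) →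
      type r ≤ type (Subrel r S) ♯ type (Subrel r T) := by
  intro o
  induction o using Ordinal.induction with
  | h o IH =>
  intro σ r _ ho S T hST
  subst ho
  by_contra hlt
  push_neg at hlt
  obtain ⟨x, hx⟩ := typein_surj r hlt
  have hPlt : type (Subrel r {y | r y x}) < type r := by
    show typein r x < type r
    exact typein_lt_type r x
  have hcov' : ∀ z : ↥{y | r y x}, z ∈ {z : ↥{y | r y x} | z.1 ∈ S}
      ∨ z ∈ {z : ↥{y | r y x} | z.1 ∈ T} := fun z => hST z.1
  have h0 := IH _ hPlt (Subrel r {y | r y x}) rfl _ _ hcov'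
  have hS' : type (Subrel (Subrel r {y | r y x}) {z : ↥{y | r y x} | z.1 ∈ S})
      = type (Subrel r ({y | r y x} ∩ S : Set σ)) := type_eq.2 ⟨subrelSubrelIso r _ S⟩
  have hT' : type (Subrel (Subrel r {y | r y x}) {z : ↥{y | r y x} | z.1 ∈ T})
      = type (Subrel r ({y | r y x} ∩ T : Set σ)) := type_eq.2 ⟨subrelSubrelIso r _ T⟩
  rw [hS', hT'] at h0
  have hfin : type (Subrel r {y | r y x}) < type (Subrel r S) ♯ type (Subrel r T) := by
    rcases hST x with hxS | hxT
    · refine h0.trans_lt (nadd_lt_nadd_of_lt_of_le ?_ ?_)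
      · have := type_subrel_inter_lt r hxS
        rwa [Set.inter_comm] at this
      · exact type_subrel_mono r Set.inter_subset_right
    · refine h0.trans_lt (nadd_lt_nadd_of_le_of_lt ?_ ?_)
      · exact type_subrel_mono r Set.inter_subset_right
      · have := type_subrel_inter_lt r hxT
        rwa [Set.inter_comm] at this
  rw [show type (Subrel r {y | r y x}) = typein r x from type_subrel r x, hx] at hfin
  exact lt_irrefl _ hfin

theorem nadd_aux {c : Ordinal.{v}} (hc : c ≠ 0) (hcl : ∀ x < c, ∀ y < c, x ♯ y < c) :
    ∀ (m : Ordinal.{v}) (q p : ℕ) (r s : Ordinal.{v}), r < c → s < c →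
      c * (q + p : ℕ) + (r ♯ s) = m →
      (c * q + r) ♯ (c * p + s) ≤ c * (q + p : ℕ) + (r ♯ s) := by
  intro m
  induction m using Ordinal.induction with
  | h m IH =>
  have side : ∀ (q p : ℕ) (r s : Ordinal.{v}), r < c → s < c →
      c * (q + p : ℕ) + (r ♯ s) = m →
      ∀ x < c * q + r, x ♯ (c * p + s) < c * (q + p : ℕ) + (r ♯ s) := by
    intro q p r s hr hs hm x hx
    by_cases hxq : x < c * q
    · have hdiv : x / c < (q : Ordinal) := (div_lt hc).2 hxq
      obtain ⟨q', hq'⟩ := lt_omega0.1 (hdiv.trans (nat_lt_omega0 q))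
      have hq'q : q' < q := by
        rw [hq'] at hdiv
        exact_mod_cast hdiv
      have hxeq : c * q' + x % c = x := by rw [← hq', div_add_mod]
      have hr' : x % c < c := mod_lt x hc
      have h2 : c * (q' + p : ℕ) + (x % c ♯ s) < c * (q + p : ℕ) + (r ♯ s) := by
        calc c * (q' + p : ℕ) + (x % c ♯ s) < c * (q' + p : ℕ) + c :=
              add_lt_add_right (hcl _ hr' _ hs) _
          _ = c * ((q' + p : ℕ) + 1) := by rw [mul_add, mul_one]
          _ = c * ((q' + p + 1 : ℕ) : Ordinal) := by rw [Nat.cast_add_one]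
          _ ≤ c * ((q + p : ℕ) : Ordinal) := by
              refine mul_le_mul_right ?_ c
              exact_mod_cast Nat.succ_le_of_lt (by omega)
          _ ≤ c * (q + p : ℕ) + (r ♯ s) := le_add_right le_rfl
      have h3 := IH _ (h2.trans_le hm.le) q' p (x % c) s hr' hs rfl
      rw [hxeq] at h3
      exact lt_of_le_of_lt h3 h2
    · push_neg at hxq
      have hxeq : c * q + (x - c * q) = x := Ordinal.add_sub_cancel_of_le hxq
      have hr'' : x - c * q < r := by
        have h4 : c * q + (x - c * q) < c * q + r := by rw [hxeq]; exact hx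
        exact lt_of_add_lt_add_left h4
      have h2 : c * (q + p : ℕ) + ((x - c * q) ♯ s) < c * (q + p : ℕ) + (r ♯ s) :=
        add_lt_add_right (nadd_lt_nadd_right hr'' s) _
      have h3 := IH _ (h2.trans_le hm.le) q p (x - c * q) s (hr''.trans hr) hs rfl
      rw [hxeq] at h3
      exact lt_of_le_of_lt h3 h2
  intro q p r s hr hs hm
  rw [nadd_le_iff]
  refine ⟨side q p r s hr hs hm, ?_⟩
  intro y hy
  rw [nadd_comm]
  have hm2 : c * (p + q : ℕ) + (s ♯ r) = m := by
    rw [Nat.add_comm p q, nadd_comm s r]; exact hm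
  have h5 := side p q s r hs hr hm2 y hy
  rwa [Nat.add_comm p q, nadd_comm s r] at h5

theorem nadd_lt_opow_omega0 :
    ∀ (E : Ordinal.{v}), ∀ a < (omega0 : Ordinal.{v}) ^ E, ∀ b < (omega0 : Ordinal.{v}) ^ E,
      a ♯ b < (omega0 : Ordinal.{v}) ^ E := by
  intro E
  induction E using Ordinal.induction with
  | h E IH =>
  intro a ha b hb
  rcases Ordinal.zero_or_succ_or_isSuccLimit E with rfl | ⟨F, rfl⟩ | hE
  · rw [opow_zero] at ha hb ⊢
    rw [Ordinal.lt_one_iff_zero] at ha hb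
    subst ha; subst hb
    rw [nadd_zero]
    exact zero_lt_one
  · rw [opow_succ] at ha hb ⊢
    obtain ⟨x, hxω, hax⟩ := (lt_mul_iff_of_isSuccLimit isSuccLimit_omega0).1 ha
    obtain ⟨y, hyω, hby⟩ := (lt_mul_iff_of_isSuccLimit isSuccLimit_omega0).1 hb
    obtain ⟨mm, rfl⟩ := lt_omega0.1 hxω
    obtain ⟨nn, rfl⟩ := lt_omega0.1 hyω
    have hc0 : (0:Ordinal) < omega0 ^ F := opow_pos F omega0_pos
    have hcl : ∀ x < (omega0:Ordinal.{v}) ^ F, ∀ y < (omega0:Ordinal.{v}) ^ F,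
        x ♯ y < (omega0:Ordinal.{v}) ^ F := fun x hx y hy => IH F (Order.lt_succ F) x hx y hy
    have key := nadd_aux hc0.ne' hcl _ mm nn 0 0 hc0 hc0 rfl
    rw [add_zero, add_zero, nadd_zero, add_zero] at key
    calc a ♯ b ≤ (omega0 ^ F * mm) ♯ (omega0 ^ F * nn) := nadd_le_nadd hax.le hby.le
      _ ≤ omega0 ^ F * ((mm + nn : ℕ) : Ordinal) := key
      _ < omega0 ^ F * omega0 := mul_lt_mul_of_pos_left (nat_lt_omega0 _) hc0
  · obtain ⟨e1, he1E, hae⟩ := (lt_opow_of_isSuccLimit omega0_ne_zero hE).1 ha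
    obtain ⟨e2, he2E, hbe⟩ := (lt_opow_of_isSuccLimit omega0_ne_zero hE).1 hb
    have h1 : a < omega0 ^ max e1 e2 :=
      hae.trans_le (opow_le_opow_right omega0_pos (le_max_left _ _))
    have h2 : b < omega0 ^ max e1 e2 :=
      hbe.trans_le (opow_le_opow_right omega0_pos (le_max_right _ _))
    exact (IH _ (max_lt he1E he2E) a h1 b h2).trans_le
      (opow_le_opow_right omega0_pos (max_lt he1E he2E).le)

theorem type_lt_of_cover_lt (E : Ordinal.{v}) :
    ∀ (n : ℕ) {σ : Type v} (r : σ → σ → Prop) [IsWellOrder σ r] (c : σ → Fin n),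
      (∀ i, type (Subrel r {x | c x = i}) < omega0 ^ E) → type r < omega0 ^ E := by
  intro n
  induction n with
  | zero =>
    intro σ r _ c _
    haveI : IsEmpty σ := ⟨fun x => (c x).elim0⟩
    rw [type_eq_zero_of_empty]
    exact opow_pos E omega0_pos
  | succ n IHn =>
    intro σ r _ c h
    have hcov : ∀ x, x ∈ {x | c x = Fin.last n} ∨ x ∈ {x | (c x : ℕ) < n} := by
      intro x
      rcases lt_or_eq_of_le (Nat.lt_succ_iff.1 (c x).isLt) with hlt | heq
      · exact Or.inr hlt
      · exact Or.inl (Fin.ext heq)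
    have h1 : type (Subrel r {x | c x = Fin.last n}) < omega0 ^ E := h _
    have h2 : type (Subrel r {x | (c x : ℕ) < n}) < omega0 ^ E := by
      refine IHn (Subrel r {x | (c x : ℕ) < n})
        (fun z => ⟨(c z.1 : ℕ), z.2⟩) ?_
      intro i
      show type (Subrel (Subrel r {x | (c x : ℕ) < n})
        {z : ↥{x | (c x : ℕ) < n} | (⟨(c z.1 : ℕ), z.2⟩ : Fin n) = i}) < omega0 ^ E
      have hset : {z : ↥{x | (c x : ℕ) < n} | (⟨(c z.1 : ℕ), z.2⟩ : Fin n) = i}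
          = {z : ↥{x | (c x : ℕ) < n} | z.1 ∈ {x | c x = Fin.castSucc i}} := by
        ext z
        simp only [Set.mem_setOf_eq, Fin.ext_iff, Fin.coe_castSucc]
      rw [hset]
      calc type (Subrel (Subrel r {x | (c x : ℕ) < n})
              {z : ↥{x | (c x : ℕ) < n} | z.1 ∈ {x | c x = Fin.castSucc i}})
          = type (Subrel r ({x | (c x : ℕ) < n} ∩ {x | c x = Fin.castSucc i} : Set σ)) :=
            type_eq.2 ⟨subrelSubrelIso r _ _⟩
        _ ≤ type (Subrel r {x | c x = Fin.castSucc i}) :=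
            type_subrel_mono r Set.inter_subset_right
        _ < omega0 ^ E := h _
    exact (type_le_nadd_of_cover (type r) r rfl _ _ hcov).trans_lt
      (nadd_lt_opow_omega0 E _ h1 _ h2)

theorem lift_opow_nat (a : Ordinal.{u}) (m : ℕ) :
    Ordinal.lift.{v} (a ^ (m : Ordinal)) = Ordinal.lift.{v} a ^ ((m : ℕ) : Ordinal) := by
  induction m with
  | zero => simp
  | succ m IH =>
    rw [Nat.cast_add_one, Nat.cast_add_one, opow_add, opow_add, opow_one, opow_one,
      lift_mul, IH]

end OrdArrowAux

open OrdArrowAux in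
theorem ordArrow_preserves_leading_exponent (α β : Ordinal.{u})
    (h : OrdArrow α β) :
    (α < Ordinal.omega0 ^ Ordinal.omega0 ↔ β < Ordinal.omega0 ^ Ordinal.omega0) ∧
    ∀ k : ℕ,
      (Ordinal.omega0 ^ (k : Ordinal) ≤ α ∧ α < Ordinal.omega0 ^ ((k : Ordinal) + 1)) ↔
      (Ordinal.omega0 ^ (k : Ordinal) ≤ β ∧ β < Ordinal.omega0 ^ ((k : Ordinal) + 1)) := by
  obtain ⟨n, c, hwo, htype⟩ := h
  haveI := hwo
  have htα : type (Subrel ((· < ·) : Ordinal.{u} → Ordinal.{u} → Prop) (Set.Iio α))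
      = Ordinal.lift.{u+1} α :=
    (type_subrel ((· < ·) : Ordinal.{u} → Ordinal.{u} → Prop) α).trans (typein_ordinal α)
  have hclassβ : ∀ i : Fin n,
      type (Subrel (Subrel ((· < ·) : Ordinal.{u} → Ordinal.{u} → Prop) (Set.Iio α))
        {x | c x = i}) ≤ Ordinal.lift.{u+1} β := by
    intro i
    rw [← htype, type_le_iff']
    refine ⟨⟨⟨Subtype.val, Subtype.val_injective⟩, ?_⟩⟩
    rintro ⟨x, hx⟩ ⟨y, hy⟩
    replace hx : c x = i := hx
    replace hy : c y = i := hy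
    show pieceOrder c x y ↔ _
    simp only [pieceOrder, hx, hy, lt_irrefl, false_or, true_and, and_iff_right rfl]
    exact Iff.rfl
  have hclassα : ∀ i : Fin n,
      type (Subrel (pieceOrder c) {x | c x = i}) ≤ Ordinal.lift.{u+1} α := by
    intro i
    rw [← htα, type_le_iff']
    refine ⟨⟨⟨Subtype.val, Subtype.val_injective⟩, ?_⟩⟩
    rintro ⟨x, hx⟩ ⟨y, hy⟩
    replace hx : c x = i := hx
    replace hy : c y = i := hy
    show x.1 < y.1 ↔ pieceOrder c x y
    simp only [pieceOrder, hx, hy, lt_irrefl, false_or, true_and, and_iff_right rfl]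
  have master : ∀ E : Ordinal.{u+1},
      (Ordinal.lift.{u+1} α < omega0 ^ E ↔ Ordinal.lift.{u+1} β < omega0 ^ E) := by
    intro E
    constructor
    · intro hα
      rw [← htype]
      exact type_lt_of_cover_lt E n (pieceOrder c) c
        (fun i => (hclassα i).trans_lt hα)
    · intro hβ
      rw [← htα]
      exact type_lt_of_cover_lt E n (Subrel (· < ·) (Set.Iio α)) c
        (fun i => (hclassβ i).trans_lt hβ)
  have mainNat : ∀ m : ℕ,
      (α < Ordinal.omega0 ^ (m : Ordinal) ↔ β < Ordinal.omega0 ^ (m : Ordinal)) := by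
    intro m
    have key : ∀ γ : Ordinal.{u}, (γ < omega0 ^ (m : Ordinal)
        ↔ Ordinal.lift.{u+1} γ < omega0 ^ ((m : ℕ) : Ordinal.{u+1})) := by
      intro γ
      rw [← lift_lt.{u+1}, lift_opow_nat, lift_omega0]
    rw [key α, key β]
    exact master _
  have charω : ∀ γ : Ordinal.{u}, (γ < omega0 ^ (omega0 : Ordinal.{u})
      ↔ ∃ m : ℕ, γ < omega0 ^ (m : Ordinal)) := by
    intro γ
    rw [lt_opow_of_isSuccLimit omega0_ne_zero isSuccLimit_omega0]
    constructor
    · rintro ⟨e, heω, hγe⟩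
      obtain ⟨m, rfl⟩ := lt_omega0.1 heω
      exact ⟨m, hγe⟩
    · rintro ⟨m, hm⟩
      exact ⟨m, nat_lt_omega0 m, hm⟩
  constructor
  · rw [charω α, charω β]
    exact exists_congr fun m => mainNat m
  · intro k
    have h1 := mainNat k
    have h2 := mainNat (k + 1)
    rw [Nat.cast_add_one] at h2
    simp only [← not_lt]
    rw [h1, h2]
end
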